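/- arXiv:0802.2921 — 2 statements merged into one kernel-verified Lean document; each statement's English description precedes it below -/
import Mathlib

section
/- For each fixed k with 1 ≤ k ≤ g, exactly one of k and 2g+1-k appears in the image set {σ(1),...,σ(g)} of any final element σ ∈ F_g, and the map F_g → F_g interchanging the two alternatives (i.e., composing with the transposition swapping k and 2g+1-k) is a fixed-point-free involution on F_g. -/
/-- The condition defining `W_g` inside `S_{2g}` (0-indexed). -/
def Wcond (g : ℕ) (σ : Equiv.Perm (Fin (2 * g))) : Prop :=
  ∀ i : Fin (2 * g), i.val < g → (σ i).val + (σ i.rev).val = 2 * g - 1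

/-- Final (Kostant) elements of `W_g`. -/
def IsFinal (g : ℕ) (σ : Equiv.Perm (Fin (2 * g))) : Prop :=
  Wcond g σ ∧ ∀ i j : Fin (2 * g), i < j → j.val < g → σ i < σ j

/-- The image set `{σ(1),…,σ(g)}` of the first `g` positions. -/
def imgSet (g : ℕ) (σ : Equiv.Perm (Fin (2 * g))) : Finset (Fin (2 * g)) :=
  Finset.univ.filter (fun v => (σ.symm v).val < g)

set_option maxHeartbeats 800000

/-- Any permutation satisfying `Wcond` commutes with `Fin.rev`. -/
lemma Wcond.apply_rev {g : ℕ} {σ : Equiv.Perm (Fin (2 * g))} (h : Wcond g σ)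
    (i : Fin (2 * g)) : σ i.rev = (σ i).rev := by
  rcases lt_or_ge i.val g with hi | hi
  · have := h i hi
    have h1 : (σ i).val < 2 * g := (σ i).isLt
    have h2 : (σ i.rev).val < 2 * g := (σ i.rev).isLt
    ext
    simp only [Fin.val_rev]
    omega
  · have hi' : i.rev.val < g := by
      have := i.isLt
      simp only [Fin.val_rev]; omega
    have := h i.rev hi'
    rw [Fin.rev_rev] at this
    have h1 : (σ i).val < 2 * g := (σ i).isLt
    ext
    simp only [Fin.val_rev]
    omega

lemma Wcond.symm_rev {g : ℕ} {σ : Equiv.Perm (Fin (2 * g))} (h : Wcond g σ)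
    (v : Fin (2 * g)) : σ.symm v.rev = (σ.symm v).rev := by
  apply σ.injective
  rw [Equiv.apply_symm_apply, h.apply_rev, Equiv.apply_symm_apply]

def pairCond (g : ℕ) (S : Finset (Fin (2 * g))) : Prop :=
  ∀ v : Fin (2 * g), v.rev ∈ S ↔ v ∉ S

lemma pairCond_imgSet {g : ℕ} {σ : Equiv.Perm (Fin (2 * g))} (h : Wcond g σ) :
    pairCond g (imgSet g σ) := by
  intro v
  simp only [imgSet, Finset.mem_filter, Finset.mem_univ, true_and, h.symm_rev]
  simp only [Fin.val_rev]
  have := (σ.symm v).isLt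
  omega

lemma pairCond.card {g : ℕ} {S : Finset (Fin (2 * g))} (hS : pairCond g S) :
    S.card = g := by
  have himg : Sᶜ.image Fin.rev = S := by
    ext v
    simp only [Finset.mem_image, Finset.mem_compl]
    constructor
    · rintro ⟨w, hw, rfl⟩
      exact (hS w).mpr hw
    · intro hv
      exact ⟨v.rev, fun hc => ((hS v).mp hc) hv, Fin.rev_rev v⟩
  have h1 : Sᶜ.card = S.card := by
    conv_rhs => rw [← himg]
    rw [Finset.card_image_of_injective _ Fin.rev_injective]
  have h2 := Finset.card_compl S
  simp only [Fintype.card_fin] at h2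
  omega

def buildFun (g : ℕ) (S : Finset (Fin (2 * g))) (hc : S.card = g) :
    Fin (2 * g) → Fin (2 * g) := fun i =>
  if h : i.val < g then ((S.orderIsoOfFin hc) ⟨i.val, h⟩ : Fin (2 * g))
  else ((S.orderIsoOfFin hc) ⟨i.rev.val, by
    have := i.isLt; simp only [Fin.val_rev]; omega⟩ : Fin (2 * g)).rev

lemma buildFun_mem_iff {g : ℕ} {S : Finset (Fin (2 * g))} (hc : S.card = g)
    (hS : pairCond g S) (i : Fin (2 * g)) :
    buildFun g S hc i ∈ S ↔ i.val < g := by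
  unfold buildFun
  split_ifs with h
  · simp only [h, iff_true]
    exact (S.orderIsoOfFin hc ⟨i.val, h⟩).2
  · simp only [h, iff_false]
    intro hc2
    exact (hS _).mp hc2 (S.orderIsoOfFin hc _).2

lemma buildFun_injective {g : ℕ} {S : Finset (Fin (2 * g))} (hc : S.card = g)
    (hS : pairCond g S) : Function.Injective (buildFun g S hc) := by
  intro i j hij
  by_cases hi : i.val < g <;> by_cases hj : j.val < g
  · simp only [buildFun, dif_pos hi, dif_pos hj] at hij
    have h2 := (S.orderIsoOfFin hc).injective (Subtype.ext hij)
    have h5 : i.val = j.val := by simpa [Fin.mk.injEq] using h2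
    exact Fin.ext h5
  · exact absurd ((buildFun_mem_iff hc hS j).mp (hij ▸ (buildFun_mem_iff hc hS i).mpr hi)) hj
  · exact absurd ((buildFun_mem_iff hc hS i).mp (hij ▸ (buildFun_mem_iff hc hS j).mpr hj)) hi
  · simp only [buildFun, dif_neg hi, dif_neg hj] at hij
    have h2 := Fin.rev_injective hij
    have h3 := (S.orderIsoOfFin hc).injective (Subtype.ext h2)
    have h4 : i.rev.val = j.rev.val := by simpa [Fin.mk.injEq] using h3
    have := i.isLt; have := j.isLt
    ext
    simp only [Fin.val_rev] at h4
    omega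

noncomputable def build (g : ℕ) (S : Finset (Fin (2 * g))) (hc : S.card = g)
    (hS : pairCond g S) : Equiv.Perm (Fin (2 * g)) :=
  Equiv.ofBijective _ (Finite.injective_iff_bijective.mp (buildFun_injective hc hS))

lemma build_isFinal {g : ℕ} {S : Finset (Fin (2 * g))} (hc : S.card = g)
    (hS : pairCond g S) : IsFinal g (build g S hc hS) := by
  have happ : ∀ i, build g S hc hS i = buildFun g S hc i := fun i => rfl
  constructor
  · intro i hi
    have hrev : ¬ i.rev.val < g := by
      have := i.isLt; simp only [Fin.val_rev]; omega
    rw [happ, happ]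
    simp only [buildFun, dif_pos hi, dif_neg hrev]
    have hidx : (⟨i.rev.rev.val, by have := i.isLt; simp only [Fin.val_rev]; omega⟩ : Fin g)
        = ⟨i.val, hi⟩ := by simp [Fin.rev_rev]
    rw [show (⟨i.rev.rev.val, _⟩ : Fin g) = ⟨i.val, hi⟩ from hidx]
    set v : Fin (2 * g) := (S.orderIsoOfFin hc ⟨i.val, hi⟩ : Fin (2 * g))
    have := v.isLt
    simp only [Fin.val_rev]
    omega
  · intro i j hij hj
    have hij' : i.val < j.val := hij
    have hi : i.val < g := by omega
    rw [happ, happ]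
    simp only [buildFun, dif_pos hi, dif_pos hj]
    have hlt : (⟨i.val, hi⟩ : Fin g) < ⟨j.val, hj⟩ := hij'
    have := (S.orderIsoOfFin hc).strictMono hlt
    exact this

lemma imgSet_build {g : ℕ} {S : Finset (Fin (2 * g))} (hc : S.card = g)
    (hS : pairCond g S) : imgSet g (build g S hc hS) = S := by
  ext v
  simp only [imgSet, Finset.mem_filter, Finset.mem_univ, true_and]
  rw [← buildFun_mem_iff hc hS ((build g S hc hS).symm v)]
  have : buildFun g S hc ((build g S hc hS).symm v) = v :=
    (build g S hc hS).apply_symm_apply v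
  rw [this]

lemma final_ext {g : ℕ} {σ τ : Equiv.Perm (Fin (2 * g))} (hσ : IsFinal g σ)
    (hτ : IsFinal g τ) (h : imgSet g σ = imgSet g τ) : σ = τ := by
  have key : ∀ (ρ : Equiv.Perm (Fin (2 * g))), IsFinal g ρ →
      StrictMono (fun m : Fin g => ρ (Fin.castLE (by omega) m)) := by
    intro ρ hρ m m' hm
    refine hρ.2 _ _ ?_ ?_
    · exact Fin.lt_iff_val_lt_val.mpr hm
    · exact m'.isLt
  have hrange : ∀ (ρ : Equiv.Perm (Fin (2 * g))),
      Set.range (fun m : Fin g => ρ (Fin.castLE (by omega) m)) = ↑(imgSet g ρ) := by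
    intro ρ
    ext v
    simp only [Set.mem_range, imgSet, Finset.coe_filter, Set.mem_setOf_eq,
      Finset.mem_univ, true_and]
    constructor
    · rintro ⟨m, rfl⟩
      rw [Equiv.symm_apply_apply]
      exact m.isLt
    · intro hv
      refine ⟨⟨(ρ.symm v).val, hv⟩, ?_⟩
      have : Fin.castLE (by omega : g ≤ 2 * g) ⟨(ρ.symm v).val, hv⟩ = ρ.symm v :=
        Fin.ext rfl
      rw [this, Equiv.apply_symm_apply]
  have hwf : WellFoundedLT (Fin g) := inferInstance
  have heq := ((key σ hσ).range_inj (key τ hτ)).mp (by rw [hrange σ, hrange τ, h])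
  have hfirst : ∀ i : Fin (2 * g), i.val < g → σ i = τ i := by
    intro i hi
    have : i = Fin.castLE (by omega : g ≤ 2 * g) ⟨i.val, hi⟩ := Fin.ext rfl
    rw [this]
    exact congrFun heq ⟨i.val, hi⟩
  ext i
  rcases lt_or_ge i.val g with hi | hi
  · exact congrArg Fin.val (hfirst i hi)
  · have hrev : i.rev.val < g := by have := i.isLt; simp only [Fin.val_rev]; omega
    have h1 : σ i = (σ i.rev).rev := by
      rw [← hσ.1.apply_rev, Fin.rev_rev]
    have h2 : τ i = (τ i.rev).rev := by
      rw [← hτ.1.apply_rev, Fin.rev_rev]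
    rw [h1, h2, hfirst i.rev hrev]

lemma swap_rev_comm {g : ℕ} (a v : Fin (2 * g)) :
    Equiv.swap a a.rev v.rev = (Equiv.swap a a.rev v).rev := by
  rcases eq_or_ne v a with rfl | hva
  · rw [Equiv.swap_apply_right, Equiv.swap_apply_left]
    exact (Fin.rev_rev _).symm
  · rcases eq_or_ne v a.rev with rfl | hvb
    · rw [Fin.rev_rev, Equiv.swap_apply_left, Equiv.swap_apply_right]
    · rw [Equiv.swap_apply_of_ne_of_ne hva hvb,
        Equiv.swap_apply_of_ne_of_ne
          (fun hc => hvb (by rw [← Fin.rev_rev v, hc]))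
          (fun hc => hva (Fin.rev_injective hc))]

lemma pairCond_image_swap {g : ℕ} {S : Finset (Fin (2 * g))} (hS : pairCond g S)
    (a : Fin (2 * g)) : pairCond g (S.image (Equiv.swap a a.rev)) := by
  intro v
  have hmem : ∀ w : Fin (2 * g), w ∈ S.image (Equiv.swap a a.rev) ↔
      Equiv.swap a a.rev w ∈ S := by
    intro w
    simp only [Finset.mem_image]
    constructor
    · rintro ⟨x, hx, rfl⟩
      rwa [Equiv.swap_apply_self]
    · intro hw
      exact ⟨_, hw, Equiv.swap_apply_self _ _ _⟩
  rw [hmem, hmem, swap_rev_comm, hS]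

/-- for fixed `1 ≤ k ≤ g`, exactly one of `k` and `2g+1-k`
(0-indexed: `k-1` and `2g-k`) lies in the image set `{σ(1),…,σ(g)}` of any
final `σ`, and interchanging the two alternatives — i.e. applying the
transposition swapping `k` and `2g+1-k` to the image set — defines a
fixed-point-free involution of `F_g`. -/
theorem final_swap_involution (g k : ℕ) (hg : 0 < g) (hk1 : 1 ≤ k) (hkg : k ≤ g) :
    (∀ σ : Equiv.Perm (Fin (2 * g)), IsFinal g σ →
      Xor' ((σ.symm ⟨k - 1, by omega⟩).val < g) ((σ.symm ⟨2 * g - k, by omega⟩).val < g)) ∧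
    ∃ f : {σ : Equiv.Perm (Fin (2 * g)) // IsFinal g σ} →
          {σ : Equiv.Perm (Fin (2 * g)) // IsFinal g σ},
      (∀ σ, imgSet g (f σ).1 =
        (imgSet g σ.1).image (Equiv.swap (⟨k - 1, by omega⟩ : Fin (2 * g)) ⟨2 * g - k, by omega⟩)) ∧
      (∀ σ, f (f σ) = σ) ∧ (∀ σ, f σ ≠ σ) := by
  set a : Fin (2 * g) := ⟨k - 1, by omega⟩ with ha
  have hba : (⟨2 * g - k, by omega⟩ : Fin (2 * g)) = a.rev := by
    ext; simp only [Fin.val_rev, ha]; omega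
  constructor
  · intro σ hσ
    rw [hba, hσ.1.symm_rev]
    have h1 := (σ.symm a).isLt
    simp only [Xor', xor_def, Fin.val_rev]
    omega
  · rw [hba]
    have hP : ∀ σ : {σ : Equiv.Perm (Fin (2 * g)) // IsFinal g σ},
        pairCond g ((imgSet g σ.1).image (Equiv.swap a a.rev)) :=
      fun σ => pairCond_image_swap (pairCond_imgSet σ.2.1) a
    refine ⟨fun σ => ⟨build g _ (hP σ).card (hP σ), build_isFinal _ _⟩, ?_, ?_, ?_⟩
    · intro σ
      exact imgSet_build (hP σ).card (hP σ)
    · intro σ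
      apply Subtype.ext
      apply final_ext (build_isFinal _ _) σ.2
      rw [imgSet_build, imgSet_build, Finset.image_image]
      have : (Equiv.swap a a.rev) ∘ (Equiv.swap a a.rev) = id := by
        funext v; simp [Equiv.swap_apply_self]
      rw [this, Finset.image_id]
      exact hP _
    · intro σ hEq
      have h1 : imgSet g σ.1 = (imgSet g σ.1).image (Equiv.swap a a.rev) := by
        conv_lhs => rw [← hEq]
        exact imgSet_build (hP σ).card (hP σ)
      have hpair := pairCond_imgSet σ.2.1 a
      by_cases haS : a ∈ imgSet g σ.1
      · have hb : a.rev ∈ imgSet g σ.1 := by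
          rw [h1]
          have := Finset.mem_image_of_mem (Equiv.swap a a.rev) haS
          rwa [Equiv.swap_apply_left] at this
        exact (hpair.mp hb) haS
      · have hb : a.rev ∈ imgSet g σ.1 := hpair.mpr haS
        have haS2 : a ∈ imgSet g σ.1 := by
          rw [h1]
          have := Finset.mem_image_of_mem (Equiv.swap a a.rev) hb
          rwa [Equiv.swap_apply_right] at this
        exact haS haS2
end

section
/- The generating function of the length over final elements factors: Σ_{w ∈ F_g} q^{ℓ(w)} = Π_{i=1}^{g} (1 + q^i). -/
open scoped Classical

/-- Length `ℓ(w) = #{i<j≤g : w(i)>w(j)} + #{i≤j≤g : w(i)+w(j)>2g+1}`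
(0-indexed values, so the last condition reads `> 2g-1`); the first count
vanishes for final elements. -/
noncomputable def len (g : ℕ) (σ : Equiv.Perm (Fin (2 * g))) : ℕ :=
  Nat.card {p : Fin (2 * g) × Fin (2 * g) // p.1 < p.2 ∧ p.2.val < g ∧ σ p.2 < σ p.1}
  + Nat.card {p : Fin (2 * g) × Fin (2 * g) //
      p.1 ≤ p.2 ∧ p.2.val < g ∧ 2 * g - 1 < (σ p.1).val + (σ p.2).val}

section Aux
open Finset

-- symmetry of a finset
def FSym (g : ℕ) (A : Finset (Fin (2 * g))) : Prop := ∀ v, v.rev ∈ A ↔ v ∉ A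

lemma image_rev_sym {g : ℕ} {A : Finset (Fin (2 * g))} (hA : FSym g A) :
    A.image Fin.rev = Aᶜ := by
  ext v
  simp only [mem_image, mem_compl]
  constructor
  · rintro ⟨a, ha, rfl⟩
    intro hrev
    have := (hA a).mp hrev
    exact this ha
  · intro hv
    exact ⟨v.rev, (hA v).mpr hv, by simp⟩

lemma card_of_sym {g : ℕ} {A : Finset (Fin (2 * g))} (hA : FSym g A) :
    A.card = g := by
  have h1 : (A.image Fin.rev).card = A.card :=
    card_image_of_injective _ Fin.rev_injective
  rw [image_rev_sym hA, card_compl] at h1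
  simp only [Fintype.card_fin] at h1
  omega

lemma card_compl_of_card {g : ℕ} {A : Finset (Fin (2 * g))} (h : A.card = g) :
    Aᶜ.card = g := by
  rw [card_compl, Fintype.card_fin, h]; omega

/-- The underlying function of the permutation attached to `A`. -/
noncomputable def pfun (g : ℕ) (A : Finset (Fin (2 * g))) (h : A.card = g)
    (i : Fin (2 * g)) : Fin (2 * g) :=
  if hi : i.val < g then A.orderEmbOfFin h ⟨i.val, hi⟩
  else Aᶜ.orderEmbOfFin (card_compl_of_card h) ⟨i.val - g, by omega⟩

lemma pfun_injective (g : ℕ) (A : Finset (Fin (2 * g))) (h : A.card = g) :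
    Function.Injective (pfun g A h) := by
  intro i j hij
  unfold pfun at hij
  by_cases hi : i.val < g <;> by_cases hj : j.val < g <;>
    simp only [hi, hj, dif_pos, dif_neg, dite_true, dite_false] at hij
  · have h2 := (A.orderEmbOfFin h).injective hij
    rw [Fin.mk.injEq] at h2
    exact Fin.ext h2
  · exfalso
    have h1 : A.orderEmbOfFin h ⟨i.val, hi⟩ ∈ A := Finset.orderEmbOfFin_mem _ _ _
    have h2 : Aᶜ.orderEmbOfFin (card_compl_of_card h) ⟨j.val - g, by omega⟩ ∈ Aᶜ :=
      Finset.orderEmbOfFin_mem _ _ _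
    rw [hij] at h1
    exact (mem_compl.mp h2) h1
  · exfalso
    have h1 : A.orderEmbOfFin h ⟨j.val, hj⟩ ∈ A := Finset.orderEmbOfFin_mem _ _ _
    have h2 : Aᶜ.orderEmbOfFin (card_compl_of_card h) ⟨i.val - g, by omega⟩ ∈ Aᶜ :=
      Finset.orderEmbOfFin_mem _ _ _
    rw [hij] at h2
    exact (mem_compl.mp h2) h1
  · have h2 := (Aᶜ.orderEmbOfFin (card_compl_of_card h)).injective hij
    rw [Fin.mk.injEq] at h2
    exact Fin.ext (by omega)

noncomputable def permOf (g : ℕ) (A : Finset (Fin (2 * g))) : Equiv.Perm (Fin (2 * g)) :=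
  if h : A.card = g then
    Equiv.ofBijective _ ((Finite.injective_iff_bijective).mp (pfun_injective g A h))
  else 1

lemma permOf_apply {g : ℕ} {A : Finset (Fin (2 * g))} (h : A.card = g) (i : Fin (2 * g)) :
    permOf g A i = pfun g A h i := by
  simp [permOf, h, Equiv.ofBijective]

lemma permOf_apply_lt {g : ℕ} {A : Finset (Fin (2 * g))} (h : A.card = g)
    {i : Fin (2 * g)} (hi : i.val < g) :
    permOf g A i = A.orderEmbOfFin h ⟨i.val, hi⟩ := by
  rw [permOf_apply h, pfun, dif_pos hi]

lemma permOf_apply_ge {g : ℕ} {A : Finset (Fin (2 * g))} (h : A.card = g)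
    {i : Fin (2 * g)} (hi : ¬ i.val < g) :
    permOf g A i = Aᶜ.orderEmbOfFin (card_compl_of_card h) ⟨i.val - g, by omega⟩ := by
  rw [permOf_apply h, pfun, dif_neg hi]

lemma compl_emb {g : ℕ} {A : Finset (Fin (2 * g))} (hS : FSym g A) (h : A.card = g)
    (j : Fin g) :
    Aᶜ.orderEmbOfFin (card_compl_of_card h) j
      = (A.orderEmbOfFin h ⟨g - 1 - j.val, by omega⟩).rev := by
  have key : (fun j : Fin g => (A.orderEmbOfFin h ⟨g - 1 - j.val, by omega⟩).rev)
      = Aᶜ.orderEmbOfFin (card_compl_of_card h) := by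
    apply Finset.orderEmbOfFin_unique
    · intro x
      rw [Finset.mem_compl]
      intro hc
      exact (hS _).mp hc (Finset.orderEmbOfFin_mem _ _ _)
    · intro a b hab
      rw [Fin.rev_lt_rev]
      apply (A.orderEmbOfFin h).strictMono
      have := b.isLt
      exact Fin.mk_lt_mk.mpr (by omega)
  exact (congrFun key j).symm

lemma permOf_rev_lt {g : ℕ} {A : Finset (Fin (2 * g))} (hS : FSym g A)
    {i : Fin (2 * g)} (hi : i.val < g) :
    permOf g A i.rev = (permOf g A i).rev := by
  have h : A.card = g := card_of_sym hS
  have hrev : ¬ (i.rev).val < g := by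
    rw [Fin.val_rev]; omega
  rw [permOf_apply_ge h hrev, permOf_apply_lt h hi, compl_emb hS h]
  congr 2
  apply Fin.ext
  simp only [Fin.val_rev]
  omega

lemma permOf_final {g : ℕ} {A : Finset (Fin (2 * g))} (hS : FSym g A) :
    IsFinal g (permOf g A) := by
  have h : A.card = g := card_of_sym hS
  constructor
  · intro i hi
    rw [permOf_rev_lt hS hi, Fin.val_rev]
    have := (permOf g A i).isLt
    omega
  · intro i j hij hj
    have hi : i.val < g := lt_of_lt_of_le hij (le_of_lt hj)
    rw [permOf_apply_lt h hi, permOf_apply_lt h hj]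
    exact (A.orderEmbOfFin h).strictMono (Fin.mk_lt_mk.mpr hij)

noncomputable def Aof (g : ℕ) (σ : Equiv.Perm (Fin (2 * g))) : Finset (Fin (2 * g)) :=
  (Finset.univ.filter (fun i : Fin (2 * g) => i.val < g)).image σ

lemma mem_Aof {g : ℕ} {σ : Equiv.Perm (Fin (2 * g))} {v : Fin (2 * g)} :
    v ∈ Aof g σ ↔ (σ.symm v).val < g := by
  simp only [Aof, mem_image, mem_filter, mem_univ, true_and]
  constructor
  · rintro ⟨i, hi, rfl⟩; simpa using hi
  · intro hv; exact ⟨σ.symm v, hv, by simp⟩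

lemma wcond_rev {g : ℕ} {σ : Equiv.Perm (Fin (2 * g))} (hw : Wcond g σ) (i : Fin (2 * g)) :
    σ i.rev = (σ i).rev := by
  by_cases hi : i.val < g
  · have := hw i hi
    apply Fin.ext
    rw [Fin.val_rev]
    have := (σ i).isLt
    omega
  · have hri : (i.rev).val < g := by
      rw [Fin.val_rev]
      have := i.isLt
      omega
    have := hw i.rev hri
    apply Fin.ext
    rw [Fin.val_rev]
    rw [Fin.rev_rev] at this
    have := (σ i.rev).isLt
    omega

lemma sym_Aof {g : ℕ} {σ : Equiv.Perm (Fin (2 * g))} (hw : Wcond g σ) :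
    FSym g (Aof g σ) := by
  intro v
  rw [mem_Aof, mem_Aof]
  have hsymm : σ.symm v.rev = (σ.symm v).rev := by
    have := wcond_rev hw (σ.symm v)
    simp only [Equiv.apply_symm_apply] at this
    rw [← this]; simp
  rw [hsymm, Fin.val_rev]
  have h1 := (σ.symm v).isLt
  omega

lemma permOf_Aof {g : ℕ} {σ : Equiv.Perm (Fin (2 * g))} (hf : IsFinal g σ) :
    permOf g (Aof g σ) = σ := by
  have hS : FSym g (Aof g σ) := sym_Aof hf.1
  have h : (Aof g σ).card = g := card_of_sym hS
  have key : ∀ i : Fin (2 * g), i.val < g → permOf g (Aof g σ) i = σ i := by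
    intro i hi
    rw [permOf_apply_lt h hi]
    have huniq : (fun j : Fin g => σ ⟨j.val, by omega⟩) = (Aof g σ).orderEmbOfFin h := by
      apply Finset.orderEmbOfFin_unique
      · intro x
        rw [mem_Aof]
        simp only [Equiv.symm_apply_apply]
        exact x.isLt
      · intro a b hab
        exact hf.2 _ _ (Fin.mk_lt_mk.mpr hab) b.isLt
    rw [← huniq]
  apply Equiv.ext
  intro i
  by_cases hi : i.val < g
  · exact key i hi
  · have hri : (i.rev).val < g := by
      rw [Fin.val_rev]; have := i.isLt; omega
    have h1 : permOf g (Aof g σ) ((i.rev).rev) = (permOf g (Aof g σ) i.rev).rev :=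
      permOf_rev_lt hS hri
    have h2 : σ ((i.rev).rev) = (σ i.rev).rev := wcond_rev hf.1 i.rev
    rw [Fin.rev_rev] at h1 h2
    rw [h1, h2, key _ hri]

lemma Aof_permOf {g : ℕ} {A : Finset (Fin (2 * g))} (hS : FSym g A) :
    Aof g (permOf g A) = A := by
  have h : A.card = g := card_of_sym hS
  ext v
  simp only [Aof, mem_image, mem_filter, mem_univ, true_and]
  constructor
  · rintro ⟨i, hi, rfl⟩
    rw [permOf_apply_lt h hi]
    exact Finset.orderEmbOfFin_mem _ _ _
  · intro hv
    have : v ∈ Set.range (A.orderEmbOfFin h) := by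
      rw [Finset.range_orderEmbOfFin]; exact hv
    obtain ⟨j, hj⟩ := this
    refine ⟨⟨j.val, by omega⟩, by simpa using j.isLt, ?_⟩
    rw [permOf_apply_lt h (by simpa using j.isLt)]
    simpa using hj

lemma card_filter_interval {n : ℕ} (l u : ℕ) (hu : u ≤ n) :
    (Finset.univ.filter fun a : Fin n => l ≤ a.val ∧ a.val < u).card = u - l := by
  have : (Finset.univ.filter fun a : Fin n => l ≤ a.val ∧ a.val < u)
      = (Finset.Ico l u).attachFin (fun m hm => lt_of_lt_of_le (Finset.mem_Ico.mp hm).2 hu) := by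
    ext a
    simp [Finset.mem_attachFin, Finset.mem_Ico]
  rw [this, Finset.card_attachFin, Nat.card_Ico]

lemma count_b {g : ℕ} {A : Finset (Fin (2 * g))} (hS : FSym g A) {b : Fin (2 * g)}
    (hb : b ∈ A) :
    (A.filter fun a => a ≤ b ∧ 2 * g ≤ a.val + b.val).card = b.val + 1 - g := by
  by_cases hb2 : b.val < g
  · rw [Finset.filter_false_of_mem, Finset.card_empty]
    · omega
    · rintro a _ ⟨h1, h2⟩
      rw [Fin.le_def] at h1
      omega
  · -- b.val ≥ g
    set k := 2 * g - 1 - b.val with hk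
    have hbval : b.val = 2 * g - 1 - k := by have := b.isLt; omega
    have hkg : k + 1 ≤ g := by have := b.isLt; omega
    have hsplit : (A.filter fun a => a ≤ b ∧ 2 * g ≤ a.val + b.val)
        = insert b (A.filter fun a : Fin (2 * g) => k + 1 ≤ a.val ∧ a.val ≤ 2 * g - 2 - k) := by
      ext a
      simp only [Finset.mem_filter, Finset.mem_insert, Fin.le_def]
      constructor
      · rintro ⟨ha, h1, h2⟩
        rcases eq_or_lt_of_le h1 with heq | hlt
        · exact Or.inl (Fin.ext heq)
        · exact Or.inr ⟨ha, by omega, by omega⟩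
      · rintro (rfl | ⟨ha, h1, h2⟩)
        · exact ⟨hb, le_refl _, by omega⟩
        · exact ⟨ha, by omega, by omega⟩
    rw [hsplit, Finset.card_insert_of_notMem (by
      simp only [Finset.mem_filter, not_and]
      intro _ _
      omega)]
    have hcore : (A.filter fun a : Fin (2 * g) => k + 1 ≤ a.val ∧ a.val ≤ 2 * g - 2 - k).card
        = g - 1 - k := by
      set J := Finset.univ.filter fun a : Fin (2 * g) => k + 1 ≤ a.val ∧ a.val < 2 * g - 1 - k
        with hJ
      set S := A.filter fun a : Fin (2 * g) => k + 1 ≤ a.val ∧ a.val ≤ 2 * g - 2 - k with hSdef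
      have hSJ : S = J.filter (fun a => a ∈ A) := by
        ext a
        simp only [hSdef, hJ, Finset.mem_filter, Finset.mem_univ, true_and]
        constructor
        · rintro ⟨h1, h2, h3⟩; exact ⟨⟨h2, by omega⟩, h1⟩
        · rintro ⟨⟨h2, h3⟩, h1⟩; exact ⟨h1, h2, by omega⟩
      have himg : S.image Fin.rev = J.filter (fun a => a ∉ A) := by
        ext v
        simp only [Finset.mem_image, hSdef, hJ, Finset.mem_filter, Finset.mem_univ, true_and]
        constructor
        · rintro ⟨a, ⟨ha, h1, h2⟩, rfl⟩
          have hav := a.isLt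
          refine ⟨⟨?_, ?_⟩, ?_⟩
          · rw [Fin.val_rev]; omega
          · rw [Fin.val_rev]; omega
          · exact fun hmem => ((hS a).mp hmem) ha
        · rintro ⟨⟨h1, h2⟩, hv⟩
          have hvv := v.isLt
          refine ⟨v.rev, ⟨(hS v).mpr hv, ?_, ?_⟩, by simp⟩
          · rw [Fin.val_rev]; omega
          · rw [Fin.val_rev]; omega
      have hcardimg : (S.image Fin.rev).card = S.card :=
        Finset.card_image_of_injective _ Fin.rev_injective
      have hJcard : J.card = 2 * g - 2 - 2 * k := by
        rw [hJ, card_filter_interval _ _ (by omega)]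
        omega
      have hpart := Finset.card_filter_add_card_filter_not
        (s := J) (p := fun a => a ∈ A)
      rw [← hSJ] at hpart
      rw [← himg, hcardimg] at hpart
      rw [hSdef] at *
      omega
    rw [hcore]
    omega

lemma len_eq {g : ℕ} (hg : 0 < g) {σ : Equiv.Perm (Fin (2 * g))} (hf : IsFinal g σ) :
    len g σ = ∑ b ∈ Aof g σ, (b.val + 1 - g) := by
  have hS : FSym g (Aof g σ) := sym_Aof hf.1
  unfold len
  have hempty : IsEmpty {p : Fin (2 * g) × Fin (2 * g) //
      p.1 < p.2 ∧ p.2.val < g ∧ σ p.2 < σ p.1} := by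
    constructor
    rintro ⟨p, h1, h2, h3⟩
    exact absurd (hf.2 p.1 p.2 h1 h2) (asymm h3)
  rw [Nat.card_of_isEmpty, zero_add, Nat.card_eq_fintype_card, Fintype.card_subtype]
  have hbij : (Finset.univ.filter fun p : Fin (2 * g) × Fin (2 * g) =>
        p.1 ≤ p.2 ∧ p.2.val < g ∧ 2 * g - 1 < (σ p.1).val + (σ p.2).val).card
      = (((Aof g σ) ×ˢ (Aof g σ)).filter fun q =>
          q.1 ≤ q.2 ∧ 2 * g ≤ q.1.val + q.2.val).card := by
    apply Finset.card_nbij' (fun p => (σ p.1, σ p.2)) (fun q => (σ.symm q.1, σ.symm q.2))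
    · rintro p hp
      simp only [Finset.mem_coe, Finset.mem_filter, Finset.mem_univ, true_and] at hp
      obtain ⟨h1, h2, h3⟩ := hp
      have hp1 : p.1.val < g := lt_of_le_of_lt (Fin.le_def.mp h1) h2
      simp only [Finset.mem_coe, Finset.mem_filter, Finset.mem_product, mem_Aof, Equiv.symm_apply_apply]
      refine ⟨⟨hp1, h2⟩, ?_, by omega⟩
      rcases eq_or_lt_of_le h1 with heq | hlt
      · rw [heq]
      · exact le_of_lt (hf.2 p.1 p.2 hlt h2)
    · rintro q hq
      simp only [Finset.mem_coe, Finset.mem_filter, Finset.mem_product, mem_Aof] at hq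
      obtain ⟨⟨hq1, hq2⟩, hle, hsum⟩ := hq
      simp only [Finset.mem_coe, Finset.mem_filter, Finset.mem_univ, true_and, Equiv.apply_symm_apply]
      refine ⟨?_, hq2, by omega⟩
      by_contra hcon
      rw [not_le] at hcon
      have h5 := hf.2 _ _ hcon hq1
      simp only [Equiv.apply_symm_apply] at h5
      exact absurd hle (not_le.mpr h5)
    · intro p _; simp
    · intro q _; simp
  rw [hbij]
  rw [Finset.card_eq_sum_card_fiberwise
    (f := fun q : Fin (2 * g) × Fin (2 * g) => q.2) (t := Aof g σ)
    (fun x hx => by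
      simp only [Finset.mem_coe, Finset.mem_filter, Finset.mem_product] at hx
      exact hx.1.2)]
  apply Finset.sum_congr rfl
  intro b hb
  have hfiber : ((((Aof g σ) ×ˢ (Aof g σ)).filter fun q =>
        q.1 ≤ q.2 ∧ 2 * g ≤ q.1.val + q.2.val).filter fun q => q.2 = b).card
      = ((Aof g σ).filter fun a => a ≤ b ∧ 2 * g ≤ a.val + b.val).card := by
    apply Finset.card_nbij' (fun q => q.1) (fun a => (a, b))
    · rintro q hq
      simp only [Finset.mem_coe, Finset.mem_filter, Finset.mem_product] at hq ⊢
      obtain ⟨⟨⟨hq1, hq2⟩, hle, hsum⟩, hqb⟩ := hq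
      subst hqb
      exact ⟨hq1, hle, hsum⟩
    · rintro a ha
      simp only [Finset.mem_coe, Finset.mem_filter, Finset.mem_product] at ha ⊢
      exact ⟨⟨⟨ha.1, hb⟩, ha.2.1, ha.2.2⟩, trivial⟩
    · rintro q hq
      simp only [Finset.mem_coe, Finset.mem_filter] at hq
      rw [← hq.2]
    · intro a _; rfl
  rw [hfiber, count_b hS hb]

noncomputable def Uof (g : ℕ) (A : Finset (Fin (2 * g))) : Finset ℕ :=
  (A.filter fun b => g ≤ b.val).image (fun b => b.val - g)

noncomputable def AU (g : ℕ) (U : Finset ℕ) : Finset (Fin (2 * g)) :=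
  Finset.univ.filter (fun v => if g ≤ v.val then v.val - g ∈ U else g - 1 - v.val ∉ U)

lemma mem_AU {g : ℕ} {U : Finset ℕ} {v : Fin (2 * g)} :
    v ∈ AU g U ↔ (if g ≤ v.val then v.val - g ∈ U else g - 1 - v.val ∉ U) := by
  simp [AU]

lemma sym_AU {g : ℕ} (U : Finset ℕ) : FSym g (AU g U) := by
  intro v
  have hv := v.isLt
  rw [mem_AU, mem_AU, Fin.val_rev]
  by_cases h : g ≤ v.val
  · rw [if_pos h, if_neg (by omega)]
    have e : g - 1 - (2 * g - (v.val + 1)) = v.val - g := by omega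
    rw [e]
  · rw [if_neg h, if_pos (by omega)]
    have e : 2 * g - (v.val + 1) - g = g - 1 - v.val := by omega
    rw [e]
    tauto

lemma mem_Uof {g : ℕ} {A : Finset (Fin (2 * g))} {i : ℕ} :
    i ∈ Uof g A ↔ ∃ b ∈ A, g ≤ b.val ∧ b.val - g = i := by
  simp only [Uof, Finset.mem_image, Finset.mem_filter]
  tauto

lemma Uof_subset {g : ℕ} (A : Finset (Fin (2 * g))) : Uof g A ⊆ Finset.range g := by
  intro i hi
  rw [mem_Uof] at hi
  obtain ⟨b, _, h1, h2⟩ := hi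
  have := b.isLt
  rw [Finset.mem_range]
  omega

lemma Uof_AU {g : ℕ} {U : Finset ℕ} (hU : U ⊆ Finset.range g) : Uof g (AU g U) = U := by
  ext i
  rw [mem_Uof]
  constructor
  · rintro ⟨b, hb, h1, rfl⟩
    rw [mem_AU, if_pos h1] at hb
    exact hb
  · intro hi
    have hig : i < g := Finset.mem_range.mp (hU hi)
    refine ⟨⟨g + i, by omega⟩, ?_, by simp, by simp⟩
    rw [mem_AU]
    simp only [if_pos (by omega : g ≤ g + i)]
    simpa using hi

lemma AU_Uof {g : ℕ} {A : Finset (Fin (2 * g))} (hS : FSym g A) : AU g (Uof g A) = A := by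
  ext v
  have hv := v.isLt
  rw [mem_AU]
  by_cases h : g ≤ v.val
  · rw [if_pos h, mem_Uof]
    constructor
    · rintro ⟨b, hb, h1, h2⟩
      have : b = v := Fin.ext (by omega)
      rwa [this] at hb
    · intro hvA
      exact ⟨v, hvA, h, rfl⟩
  · rw [if_neg h, mem_Uof]
    constructor
    · intro hne
      by_contra hvA
      apply hne
      refine ⟨v.rev, (hS v).mpr hvA, ?_, ?_⟩
      · rw [Fin.val_rev]; omega
      · rw [Fin.val_rev]; omega
    · intro hvA
      rintro ⟨b, hb, h1, h2⟩
      have hbrev : b = v.rev := Fin.ext (by rw [Fin.val_rev]; omega)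
      rw [hbrev] at hb
      exact ((hS v).mp hb) hvA

lemma weight_AU {g : ℕ} (hg : 0 < g) {U : Finset ℕ} (hU : U ⊆ Finset.range g) :
    ∑ b ∈ AU g U, (b.val + 1 - g) = ∑ i ∈ U, (i + 1) := by
  rw [← Finset.sum_filter_of_ne (p := fun b : Fin (2 * g) => g ≤ b.val)
    (fun x _ hx => by by_contra hc; rw [not_le] at hc; omega)]
  apply Finset.sum_nbij' (fun b : Fin (2 * g) => b.val - g)
    (fun i => (⟨(g + i) % (2 * g), Nat.mod_lt _ (by omega)⟩ : Fin (2 * g)))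
  · rintro b hb
    simp only [Finset.mem_filter] at hb
    rw [mem_AU, if_pos hb.2] at hb
    exact hb.1
  · intro i hi
    have hig : i < g := Finset.mem_range.mp (hU hi)
    have hmod : (g + i) % (2 * g) = g + i := Nat.mod_eq_of_lt (by omega)
    simp only [Finset.mem_filter, mem_AU, hmod]
    rw [if_pos (by omega : g ≤ g + i)]
    constructor
    · simpa using hi
    · omega
  · rintro b hb
    simp only [Finset.mem_filter] at hb
    apply Fin.ext
    simp only []
    have := b.isLt
    rw [Nat.mod_eq_of_lt (by omega)]
    omega
  · intro i hi
    have hig : i < g := Finset.mem_range.mp (hU hi)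
    simp only []
    rw [Nat.mod_eq_of_lt (by omega)]
    omega
  · rintro b hb
    simp only [Finset.mem_filter] at hb
    omega

end Aux

/-- `Σ_{w ∈ F_g} q^{ℓ(w)} = Π_{i=1}^{g} (1 + q^i)` in `ℤ[q]`. -/
theorem final_length_generating_function (g : ℕ) (hg : 0 < g) :
    ∑ σ ∈ Finset.univ.filter (fun σ : Equiv.Perm (Fin (2 * g)) => IsFinal g σ),
        (Polynomial.X : Polynomial ℤ) ^ (len g σ)
      = ∏ i ∈ Finset.range g, (1 + (Polynomial.X : Polynomial ℤ) ^ (i + 1)) := by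

  have step1 : ∑ σ ∈ Finset.univ.filter (fun σ : Equiv.Perm (Fin (2 * g)) => IsFinal g σ),
        (Polynomial.X : Polynomial ℤ) ^ (len g σ)
      = ∑ A ∈ Finset.univ.filter (fun A : Finset (Fin (2 * g)) => FSym g A),
          (Polynomial.X : Polynomial ℤ) ^ (∑ b ∈ A, (b.val + 1 - g)) := by
    apply Finset.sum_nbij' (Aof g) (permOf g)
    · intro σ hσ
      simp only [Finset.mem_filter, Finset.mem_univ, true_and] at hσ ⊢
      exact sym_Aof hσ.1
    · intro A hA
      simp only [Finset.mem_filter, Finset.mem_univ, true_and] at hA ⊢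
      exact permOf_final hA
    · intro σ hσ
      simp only [Finset.mem_filter, Finset.mem_univ, true_and] at hσ
      exact permOf_Aof hσ
    · intro A hA
      simp only [Finset.mem_filter, Finset.mem_univ, true_and] at hA
      exact Aof_permOf hA
    · intro σ hσ
      simp only [Finset.mem_filter, Finset.mem_univ, true_and] at hσ
      rw [len_eq hg hσ]
  have step2 : ∑ A ∈ Finset.univ.filter (fun A : Finset (Fin (2 * g)) => FSym g A),
        (Polynomial.X : Polynomial ℤ) ^ (∑ b ∈ A, (b.val + 1 - g))
      = ∑ U ∈ (Finset.range g).powerset, (Polynomial.X : Polynomial ℤ) ^ (∑ i ∈ U, (i + 1)) := by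
    apply Finset.sum_nbij' (Uof g) (AU g)
    · intro A hA
      rw [Finset.mem_powerset]
      exact Uof_subset A
    · intro U hU
      simp only [Finset.mem_filter, Finset.mem_univ, true_and]
      exact sym_AU U
    · intro A hA
      simp only [Finset.mem_filter, Finset.mem_univ, true_and] at hA
      exact AU_Uof hA
    · intro U hU
      exact Uof_AU (Finset.mem_powerset.mp hU)
    · intro A hA
      simp only [Finset.mem_filter, Finset.mem_univ, true_and] at hA
      have h1 := weight_AU hg (Uof_subset A)
      rw [AU_Uof hA] at h1
      rw [h1]
  rw [step1, step2]
  have step3 : ∏ i ∈ Finset.range g, (1 + (Polynomial.X : Polynomial ℤ) ^ (i + 1))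
      = ∑ U ∈ (Finset.range g).powerset,
          (Polynomial.X : Polynomial ℤ) ^ (∑ i ∈ U, (i + 1)) := by
    rw [Finset.prod_congr rfl (fun i _ => add_comm 1 ((Polynomial.X : Polynomial ℤ) ^ (i + 1))),
      Finset.prod_add]
    apply Finset.sum_congr rfl
    intro t ht
    rw [Finset.prod_const_one, mul_one, Finset.prod_pow_eq_pow_sum]
  rw [step3]
end
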